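/- Let η = e^{iπ/4} and let a be the diagonal 4×4 unitary matrix η^{1/4}·diag(η, η², η⁴, 1) of order 8 (modulo the center of SU(4)). Then there is no invertible 4×4 complex matrix b satisfying a b = b a³ · i^r for any integer r. -/
import Mathlib


open Complex

/-- The matrix `a = η^{1/4} · diag(η, η², η⁴, 1)` with `η = e^{iπ/4}`, generating the
`ℤ₈` symmetry of the 4HDM. -/
noncomputable def aZ8 : Matrix (Fin 4) (Fin 4) ℂ :=
  Complex.exp ((Real.pi : ℂ) * I / 16) •
    Matrix.diagonal ![Complex.exp ((Real.pi : ℂ) * I / 4),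
      Complex.exp ((Real.pi : ℂ) * I / 2), Complex.exp ((Real.pi : ℂ) * I), 1]

lemma c8_eq_I : Complex.exp ((Real.pi : ℂ) * I / 16) ^ 8 = I := by
  rw [← Complex.exp_nat_mul]
  have h : ((8:ℕ):ℂ) * ((Real.pi:ℂ) * I / 16) = (Real.pi/2 : ℝ) * I := by push_cast; ring
  rw [h, Complex.exp_mul_I, ← Complex.ofReal_cos, ← Complex.ofReal_sin]
  norm_num

lemma d8_eq_one (j : Fin 4) :
    (![Complex.exp ((Real.pi : ℂ) * I / 4),
      Complex.exp ((Real.pi : ℂ) * I / 2), Complex.exp ((Real.pi : ℂ) * I), 1] : Fin 4 → ℂ)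
      j ^ 8 = 1 := by
  have key : ∀ (n : ℤ) (z : ℂ), ((8:ℕ):ℂ) * z = n * (2 * Real.pi * I) →
      Complex.exp z ^ 8 = 1 := by
    intro n z hz
    rw [← Complex.exp_nat_mul, hz, Complex.exp_int_mul_two_pi_mul_I]
  fin_cases j
  · exact key 1 _ (by push_cast; ring)
  · exact key 2 _ (by push_cast; ring)
  · exact key 4 _ (by push_cast; ring)
  · simp

lemma Ir8_eq_one (r : ℤ) : ((I:ℂ) ^ r) ^ 8 = 1 := by
  rw [← zpow_natCast ((I:ℂ)^r), ← zpow_mul, mul_comm, zpow_mul, zpow_natCast]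
  norm_num [pow_succ]

/-- There is no invertible 4×4 complex matrix `b` with `a b = b a³ · i^r` for any
integer `r`, where `a` is the `ℤ₈` generator above: the extension `ℤ₈ ⋊ ℤ₂` with the
automorphism `a ↦ a³` cannot be realized. -/
theorem no_Z8_extension (b : Matrix (Fin 4) (Fin 4) ℂ) (hb : IsUnit b) (r : ℤ) :
    aZ8 * b ≠ I ^ r • (b * aZ8 ^ 3) := by
  intro h
  set c : ℂ := Complex.exp ((Real.pi : ℂ) * I / 16) with hc
  set d : Fin 4 → ℂ := ![Complex.exp ((Real.pi : ℂ) * I / 4),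
      Complex.exp ((Real.pi : ℂ) * I / 2), Complex.exp ((Real.pi : ℂ) * I), 1] with hd
  have haZ8 : aZ8 = c • Matrix.diagonal d := rfl
  refine hb.ne_zero ?_
  ext j l
  have he := congrFun (congrFun h j) l
  rw [haZ8] at he
  rw [Matrix.smul_mul, smul_pow, Matrix.diagonal_pow, Matrix.mul_smul] at he
  simp only [Matrix.smul_apply, Matrix.diagonal_mul, Matrix.mul_diagonal, smul_eq_mul,
    Pi.pow_apply] at he
  -- he : c * (d j * b j l) = I ^ r * (c ^ 3 * (b j l * d l ^ 3))
  by_contra hne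
  have hkey : c * d j = I ^ r * (c ^ 3 * d l ^ 3) := by
    have h1 : (c * d j) * b j l = (I ^ r * (c ^ 3 * d l ^ 3)) * b j l := by
      linear_combination he
    exact mul_right_cancel₀ hne h1
  have h8 := congrArg (· ^ 8) hkey
  simp only [mul_pow, ← pow_mul] at h8
  have hL : c ^ 8 * d j ^ 8 = I := by rw [c8_eq_I, hd, d8_eq_one]; ring
  have hc24 : c ^ (3 * 8) = -I := by
    have : c ^ (3 * 8) = (c ^ 8) ^ 3 := by ring
    rw [this, c8_eq_I]
    simp [pow_succ]
  have hd24 : d l ^ (3 * 8) = 1 := by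
    have : d l ^ (3 * 8) = (d l ^ 8) ^ 3 := by ring
    rw [this, hd, d8_eq_one]; simp
  rw [hL, Ir8_eq_one, hc24, hd24] at h8
  simp only [one_mul, mul_one] at h8
  exact Complex.I_ne_zero (by linear_combination h8 / 2)
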